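/- Let z, x̃ ∈ ℝ^N with F(z) < ∞, let β, ε, C, A_max > 0 and w ∈ (0, 1] with β ≥ 2wC·A_max + ε, and set z' := (1 − w)z + w·x̃. Define A_z(x) := A(z) + A'(z)(x − z), J_z(x) := (1/2)‖A_z(x)‖² + F(x), and J̃_z(x) := J_z(x) + (β/2)‖x − z‖². If J̃_z(x̃) ≤ J̃_z(z), ‖A(z') − A_z(z')‖ ≤ C‖z' − z‖², and ‖A(z')‖ ≤ A_max, then J(z) − J(z') ≥ (wε/2)‖z − x̃‖² (the per-iteration sufficient-decrease inequality (2.10)). -/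

import Mathlib

open scoped RealInnerProductSpace

/-- The objective `J(x) = (1/2)‖A(x)‖² + F(x)` with extended-real-valued `F`. -/
noncomputable def Jobj {N M : ℕ} (F : EuclideanSpace ℝ (Fin N) → EReal)
    (A : EuclideanSpace ℝ (Fin N) → EuclideanSpace ℝ (Fin M))
    (x : EuclideanSpace ℝ (Fin N)) : EReal :=
  ((1 / 2 * ‖A x‖ ^ 2 : ℝ) : EReal) + F x

/-- The linearisation `A_z(x) = A(z) + A'(z)(x − z)`. -/
noncomputable def Alin {N M : ℕ}
    (A : EuclideanSpace ℝ (Fin N) → EuclideanSpace ℝ (Fin M))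
    (A' : EuclideanSpace ℝ (Fin N) → (EuclideanSpace ℝ (Fin N) →L[ℝ] EuclideanSpace ℝ (Fin M)))
    (z x : EuclideanSpace ℝ (Fin N)) : EuclideanSpace ℝ (Fin M) :=
  A z + A' z (x - z)

/-- The linearised objective `J_z(x) = (1/2)‖A_z(x)‖² + F(x)`. -/
noncomputable def Jlin {N M : ℕ} (F : EuclideanSpace ℝ (Fin N) → EReal)
    (A : EuclideanSpace ℝ (Fin N) → EuclideanSpace ℝ (Fin M))
    (A' : EuclideanSpace ℝ (Fin N) → (EuclideanSpace ℝ (Fin N) →L[ℝ] EuclideanSpace ℝ (Fin M)))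
    (z x : EuclideanSpace ℝ (Fin N)) : EReal :=
  ((1 / 2 * ‖Alin A A' z x‖ ^ 2 : ℝ) : EReal) + F x

/-- The proximally relaxed linearised objective `J̃_z(x) = J_z(x) + (β/2)‖x − z‖²`. -/
noncomputable def Jprox {N M : ℕ} (F : EuclideanSpace ℝ (Fin N) → EReal)
    (A : EuclideanSpace ℝ (Fin N) → EuclideanSpace ℝ (Fin M))
    (A' : EuclideanSpace ℝ (Fin N) → (EuclideanSpace ℝ (Fin N) →L[ℝ] EuclideanSpace ℝ (Fin M)))
    (β : ℝ) (z x : EuclideanSpace ℝ (Fin N)) : EReal :=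
  Jlin F A A' z x + ((β / 2 * ‖x - z‖ ^ 2 : ℝ) : EReal)

lemma aux_norm_sq_convex {M : ℕ} (u v : EuclideanSpace ℝ (Fin M)) (w : ℝ)
    (h0 : 0 ≤ w) (h1 : w ≤ 1) :
    ‖(1 - w) • u + w • v‖ ^ 2 ≤ (1 - w) * ‖u‖ ^ 2 + w * ‖v‖ ^ 2 := by
  have h := norm_add_sq_real ((1 - w) • u) (w • v)
  rw [real_inner_smul_left, real_inner_smul_right, norm_smul, norm_smul,
    Real.norm_eq_abs, Real.norm_eq_abs, abs_of_nonneg (by linarith : (0:ℝ) ≤ 1 - w),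
    abs_of_nonneg h0] at h
  have hi := real_inner_le_norm u v
  have hkey : 0 ≤ (1 - w) * w * (‖u‖ - ‖v‖) ^ 2 :=
    mul_nonneg (mul_nonneg (by linarith) h0) (sq_nonneg _)
  have hkey2 : (1 - w) * w * inner ℝ u v ≤ (1 - w) * w * (‖u‖ * ‖v‖) :=
    mul_le_mul_of_nonneg_left hi (mul_nonneg (by linarith) h0)
  nlinarith [norm_nonneg u, norm_nonneg v]

lemma aux_normsq_err {M : ℕ} (a b : EuclideanSpace ℝ (Fin M)) :
    ‖a‖ ^ 2 ≤ ‖b‖ ^ 2 + 2 * ‖a‖ * ‖a - b‖ := by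
  have h := norm_sub_sq_real a (a - b)
  rw [sub_sub_cancel] at h
  nlinarith [real_inner_le_norm a (a - b), sq_nonneg ‖a - b‖]

/-- The per-iteration sufficient-decrease inequality (2.10):
`J(z) − J(z') ≥ (wε/2)‖z − x̃‖²` for `z' = (1 − w)z + w·x̃`. -/
theorem stmt_4 {N M : ℕ}
    (F : EuclideanSpace ℝ (Fin N) → EReal)
    (A : EuclideanSpace ℝ (Fin N) → EuclideanSpace ℝ (Fin M))
    (A' : EuclideanSpace ℝ (Fin N) → (EuclideanSpace ℝ (Fin N) →L[ℝ] EuclideanSpace ℝ (Fin M)))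
    (hFconv : ∀ x y : EuclideanSpace ℝ (Fin N), ∀ a b : ℝ, 0 ≤ a → 0 ≤ b → a + b = 1 →
      F (a • x + b • y) ≤ (a : EReal) * F x + (b : EReal) * F y)
    (hFproper : ∃ x, F x ≠ ⊤)
    (hFnebot : ∀ x, F x ≠ ⊥)
    (hFlsc : LowerSemicontinuous F)
    (hA : ∀ x, HasFDerivAt A (A' x) x)
    (hA'cont : Continuous A')
    (z xt : EuclideanSpace ℝ (Fin N)) (hz : F z < ⊤)
    (β ε C Amax w : ℝ)
    (hβ : 0 < β) (hε : 0 < ε) (hC : 0 < C) (hAmax : 0 < Amax)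
    (hw : w ∈ Set.Ioc (0 : ℝ) 1)
    (hβw : 2 * w * C * Amax + ε ≤ β)
    (z' : EuclideanSpace ℝ (Fin N)) (hz' : z' = (1 - w) • z + w • xt)
    (hdec : Jprox F A A' β z xt ≤ Jprox F A A' β z z)
    (herr : ‖A z' - Alin A A' z z'‖ ≤ C * ‖z' - z‖ ^ 2)
    (hbnd : ‖A z'‖ ≤ Amax) :
    Jobj F A z' + ((w * ε / 2 * ‖z - xt‖ ^ 2 : ℝ) : EReal) ≤ Jobj F A z := by

  obtain ⟨hw0, hw1⟩ := hw
  have hAlinzz : Alin A A' z z = A z := by simp [Alin]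
  have hzt : F z ≠ ⊤ := hz.ne
  have hzb : F z ≠ ⊥ := hFnebot z
  have hFz : F z = ((F z).toReal : EReal) := (EReal.coe_toReal hzt hzb).symm
  set fz := (F z).toReal with hfzdef
  have hproxz : Jprox F A A' β z z = ((1/2*‖A z‖^2 + fz : ℝ) : EReal) := by
    rw [Jprox, Jlin, hAlinzz, hFz]
    simp only [sub_self, norm_zero]
    norm_cast
    ring
  have hxtt : F xt ≠ ⊤ := by
    intro h
    have htop : Jprox F A A' β z xt = ⊤ := by
      rw [Jprox, Jlin, h, EReal.coe_add_top, EReal.top_add_coe]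
    rw [htop, hproxz, top_le_iff] at hdec
    exact (EReal.coe_ne_top _) hdec
  have hFxt : F xt = ((F xt).toReal : EReal) := (EReal.coe_toReal hxtt (hFnebot xt)).symm
  set fxt := (F xt).toReal with hfxtdef
  have hdecR : 1/2*‖Alin A A' z xt‖^2 + fxt + β/2*‖xt - z‖^2 ≤ 1/2*‖A z‖^2 + fz := by
    rw [hproxz, Jprox, Jlin, hFxt, ← EReal.coe_add, ← EReal.coe_add] at hdec
    exact_mod_cast hdec
  have hconv := hFconv z xt (1 - w) w (by linarith) hw0.le (by ring)
  rw [← hz'] at hconv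
  have hFz' : F z' ≤ (((1-w)*fz + w*fxt : ℝ) : EReal) := by
    refine hconv.trans_eq ?_
    rw [hFz, hFxt]
    norm_cast
  have hzz' : z' - z = w • (xt - z) := by rw [hz']; module
  have hnz' : ‖z' - z‖^2 = w^2 * ‖xt - z‖^2 := by
    rw [hzz', norm_smul, Real.norm_eq_abs, abs_of_pos hw0]
    ring
  have hAlinz' : Alin A A' z z' = (1-w) • (A z) + w • (Alin A A' z xt) := by
    rw [Alin, Alin, hzz', map_smul]
    module
  have hq2 : ‖Alin A A' z z'‖^2 ≤ (1-w)*‖A z‖^2 + w*‖Alin A A' z xt‖^2 := by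
    rw [hAlinz']
    exact aux_norm_sq_convex _ _ w hw0.le hw1
  have hq1 : ‖A z'‖^2 ≤ ‖Alin A A' z z'‖^2 + 2*‖A z'‖*‖A z' - Alin A A' z z'‖ :=
    aux_normsq_err _ _
  have herr' : ‖A z' - Alin A A' z z'‖ ≤ C*(w^2*‖xt - z‖^2) :=
    herr.trans_eq (by rw [hnz'])
  have herr2 : 2*‖A z'‖*‖A z' - Alin A A' z z'‖ ≤ 2*Amax*(C*(w^2*‖xt - z‖^2)) := by
    have := mul_le_mul hbnd herr' (norm_nonneg _) hAmax.le
    nlinarith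
  have hnorm : ‖z - xt‖ = ‖xt - z‖ := norm_sub_rev _ _
  have hreal : 1/2*‖A z'‖^2 + ((1-w)*fz + w*fxt) + w*ε/2*‖z - xt‖^2
      ≤ 1/2*‖A z‖^2 + fz := by
    rw [hnorm]
    nlinarith [mul_le_mul_of_nonneg_left hdecR hw0.le,
      mul_nonneg (mul_nonneg hw0.le (sq_nonneg ‖xt - z‖))
        (by linarith : (0:ℝ) ≤ β - (2*w*C*Amax + ε)),
      sq_nonneg ‖xt - z‖]
  rw [Jobj, Jobj, hFz]
  calc ((1/2*‖A z'‖^2 : ℝ) : EReal) + F z' + ((w*ε/2*‖z - xt‖^2 : ℝ) : EReal)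
      ≤ ((1/2*‖A z'‖^2 : ℝ) : EReal) + (((1-w)*fz + w*fxt : ℝ) : EReal)
          + ((w*ε/2*‖z - xt‖^2 : ℝ) : EReal) :=
        add_le_add_left (add_le_add_right hFz' _) _
    _ ≤ ((1/2*‖A z‖^2 : ℝ) : EReal) + (fz : EReal) := by
        rw [← EReal.coe_add, ← EReal.coe_add, ← EReal.coe_add]
        exact_mod_cast hreal
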